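/- arXiv:1809.00941 — 2 statements merged into one kernel-verified Lean document; each statement's English description precedes it below -/
import Mathlib

section
/- Let B be a filtered bialgebra whose degree-zero part is spanned by group-like elements and A a commutative algebra. If φ : B → A is a linear map sending group-like elements to 1, is multiplicative (φ(xy) = φ(x)φ(y)), and ψ is its convolution inverse, then ψ is also multiplicative. -/
open TensorProduct

section

variable {k : Type*} [Field k] {B : Type*} [Ring B] [Bialgebra k B]
variable {A : Type*} [CommRing A] [Algebra k A]

/-- Convolution product on `Lin(B, A)`. -/
noncomputable def conv (α β : B →ₗ[k] A) : B →ₗ[k] A :=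
  LinearMap.mul' k A ∘ₗ TensorProduct.map α β ∘ₗ Coalgebra.comul

/-- The convolution unit `e = u ∘ ε`. -/
noncomputable def convUnit : B →ₗ[k] A :=
  Algebra.linearMap k A ∘ₗ Coalgebra.counit

/-- Group-like elements: `Δ x = x ⊗ x` and `ε x = 1`. -/
def IsGroupLike (x : B) : Prop :=
  Coalgebra.comul x = x ⊗ₜ[k] x ∧ Coalgebra.counit x = (1 : k)

/-- Filtration condition `Δ(Bₙ) ⊆ ∑_{p+q=n} B_p ⊗ B_q`. -/
def ComulFiltered (F : ℕ → Submodule k B) : Prop :=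
  ∀ n : ℕ, F n ≤ Submodule.comap (Coalgebra.comul : B →ₗ[k] B ⊗[k] B)
    (⨆ p ∈ {p : ℕ × ℕ | p.1 + p.2 = n},
      LinearMap.range (TensorProduct.map (F p.1).subtype (F p.2).subtype))

lemma my_conv_repr (α β : B →ₗ[k] A) {b : B} {ι : Type*} (t : Coalgebra.Repr k b ι) :
    conv α β b = ∑ i ∈ t.index, α (t.left i) * β (t.right i) := by
  simp [conv, ← t.eq, map_sum]

lemma my_convUnit_apply (b : B) :
    convUnit (k := k) (A := A) b = algebraMap k A (Coalgebra.counit b) := rfl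

noncomputable def my_tri (f g h : B →ₗ[k] A) : B →ₗ[k] B →ₗ[k] B →ₗ[k] A :=
  ((LinearMap.mul k A).compl₁₂ f g).compr₂ ((LinearMap.mul k A).compl₂ h)

@[simp] lemma my_tri_apply (f g h : B →ₗ[k] A) (a b c : B) :
    my_tri f g h a b c = f a * g b * h c := rfl

lemma my_exchange {b : B} {ι κ Λ : Type*} (t : Coalgebra.Repr k b ι) (t1 : ∀ i, Coalgebra.Repr k (t.left i) κ)
    (t2 : ∀ i, Coalgebra.Repr k (t.right i) Λ) (f g h : B →ₗ[k] A) :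
    ∑ i ∈ t.index, ∑ p ∈ (t1 i).index,
        f ((t1 i).left p) * g ((t1 i).right p) * h (t.right i) =
    ∑ i ∈ t.index, ∑ p ∈ (t2 i).index,
        f (t.left i) * g ((t2 i).left p) * h ((t2 i).right p) := by
  have hh := Coalgebra.sum_tmul_tmul_eq t t1 t2
  have h2 := congrArg (TensorProduct.lift
    ((TensorProduct.lift.equiv (RingHom.id k) B B A).toLinearMap ∘ₗ my_tri f g h)) hh
  simpa [map_sum, TensorProduct.lift.equiv_apply] using h2

lemma my_smul_left {b : B} {ι : Type*} (t : Coalgebra.Repr k b ι) :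
    ∑ i ∈ t.index, Coalgebra.counit (R := k) (t.left i) • t.right i = b := by
  have h2 := congrArg (TensorProduct.lid k B) (Coalgebra.sum_counit_tmul_eq t)
  simp only [map_sum, TensorProduct.lid_tmul, one_smul] at h2
  exact h2

lemma my_smul_right {b : B} {ι : Type*} (t : Coalgebra.Repr k b ι) :
    ∑ i ∈ t.index, Coalgebra.counit (R := k) (t.right i) • t.left i = b := by
  have h2 := congrArg (TensorProduct.rid k B) (Coalgebra.sum_tmul_counit_eq t)
  simp only [map_sum, TensorProduct.rid_tmul, one_smul] at h2
  exact h2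

noncomputable def my_mulRepr {b c : B} {ι κ : Type*} (t : Coalgebra.Repr k b ι) (u : Coalgebra.Repr k c κ) :
    Coalgebra.Repr k (b * c) (ι × κ) where
  index := t.index ×ˢ u.index
  left := fun p => t.left p.1 * u.left p.2
  right := fun p => t.right p.1 * u.right p.2
  eq := by
    have : CoalgebraStruct.comul (R := k) (b * c) =
        CoalgebraStruct.comul (R := k) b * CoalgebraStruct.comul (R := k) c := by
      simp
    rw [this, ← t.eq, ← u.eq, Finset.sum_mul_sum, Finset.sum_product]
    simp [Algebra.TensorProduct.tmul_mul_tmul]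

/-- If `φ` is multiplicative and sends group-like elements to `1`, then its
convolution inverse `ψ` is also multiplicative. -/
theorem conv_inverse_multiplicative (F : ℕ → Submodule k B) (hmono : Monotone F)
    (hexh : ⨆ n, F n = ⊤) (hfilt : ComulFiltered F)
    (hF0 : F 0 = Submodule.span k {x : B | IsGroupLike (k := k) x})
    (φ ψ : B →ₗ[k] A)
    (hφ1 : ∀ x : B, IsGroupLike (k := k) x → φ x = 1)
    (hφm : ∀ x y : B, φ (x * y) = φ x * φ y)
    (hψ : conv ψ φ = convUnit ∧ conv φ ψ = convUnit) :
    ∀ x y : B, ψ (x * y) = ψ x * ψ y := by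
  obtain ⟨hψφ, hφψ⟩ := hψ
  have P1 : ∀ (b : B) (t : Coalgebra.Repr k b ((B × B) × (B × B))),
      ∑ i ∈ t.index, ψ (t.left i) * φ (t.right i) = algebraMap k A (Coalgebra.counit b) := by
    intro b t
    rw [← my_conv_repr ψ φ t, hψφ, my_convUnit_apply]
  have P2 : ∀ (b : B) (t : Coalgebra.Repr k b (B × B)),
      ∑ i ∈ t.index, φ (t.left i) * ψ (t.right i) = algebraMap k A (Coalgebra.counit b) := by
    intro b t
    rw [← my_conv_repr φ ψ t, hφψ, my_convUnit_apply]
  intro x y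
  let r : Coalgebra.Repr k x (B × B) := Coalgebra.Repr.arbitrary k x
  let s : Coalgebra.Repr k y (B × B) := Coalgebra.Repr.arbitrary k y
  let r1 : ∀ i, Coalgebra.Repr k (r.left i) (B × B) := fun i => Coalgebra.Repr.arbitrary k _
  let r2 : ∀ i, Coalgebra.Repr k (r.right i) (B × B) := fun i => Coalgebra.Repr.arbitrary k _
  let s1 : ∀ j, Coalgebra.Repr k (s.left j) (B × B) := fun j => Coalgebra.Repr.arbitrary k _
  let s2 : ∀ j, Coalgebra.Repr k (s.right j) (B × B) := fun j => Coalgebra.Repr.arbitrary k _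
  have hx : ψ x = ∑ i ∈ r.index, Coalgebra.counit (R := k) (r.left i) • ψ (r.right i) := by
    conv_lhs => rw [← my_smul_left r]
    simp
  have hy : ψ y = ∑ j ∈ s.index, Coalgebra.counit (R := k) (s.left j) • ψ (s.right j) := by
    conv_lhs => rw [← my_smul_left s]
    simp
  symm
  calc ψ x * ψ y
      = ∑ i ∈ r.index, ∑ j ∈ s.index,
          algebraMap k A (Coalgebra.counit (R := k) (r.left i * s.left j)) *
            (ψ (r.right i) * ψ (s.right j)) := by
        rw [hx, hy, Finset.sum_mul_sum]
        refine Finset.sum_congr rfl fun i _ => Finset.sum_congr rfl fun j _ => ?_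
        simp only [Algebra.smul_def]
        rw [show Coalgebra.counit (R := k) (r.left i * s.left j)
            = Coalgebra.counit (R := k) (r.left i) * Coalgebra.counit (R := k) (s.left j)
          from by simp, map_mul]
        ring
    _ = ∑ i ∈ r.index, ∑ j ∈ s.index,
          (∑ p ∈ (r1 i).index, ∑ q ∈ (s1 j).index,
            ψ ((r1 i).left p * (s1 j).left q) * φ ((r1 i).right p * (s1 j).right q)) *
            (ψ (r.right i) * ψ (s.right j)) := by
        refine Finset.sum_congr rfl fun i _ => Finset.sum_congr rfl fun j _ => ?_
        congr 1
        rw [← P1 _ (my_mulRepr (r1 i) (s1 j))]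
        exact (Finset.sum_product _ _ _)
    _ = ∑ i ∈ r.index, ∑ j ∈ s.index, ∑ p ∈ (r1 i).index, ∑ q ∈ (s1 j).index,
          ψ ((r1 i).left p * (s1 j).left q) * φ ((r1 i).right p) *
            (φ ((s1 j).right q) * ψ (s.right j) * ψ (r.right i)) := by
        refine Finset.sum_congr rfl fun i _ => Finset.sum_congr rfl fun j _ => ?_
        rw [Finset.sum_mul]
        refine Finset.sum_congr rfl fun p _ => ?_
        rw [Finset.sum_mul]
        refine Finset.sum_congr rfl fun q _ => ?_
        rw [hφm]
        ring
    _ = ∑ j ∈ s.index, ∑ q ∈ (s1 j).index, ∑ i ∈ r.index, ∑ p ∈ (r1 i).index,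
          ψ ((r1 i).left p * (s1 j).left q) * φ ((r1 i).right p) *
            (φ ((s1 j).right q) * ψ (s.right j) * ψ (r.right i)) := by
        rw [Finset.sum_comm]
        refine Finset.sum_congr rfl fun j _ => ?_
        calc (∑ i ∈ r.index, ∑ p ∈ (r1 i).index, ∑ q ∈ (s1 j).index,
                ψ ((r1 i).left p * (s1 j).left q) * φ ((r1 i).right p) *
                  (φ ((s1 j).right q) * ψ (s.right j) * ψ (r.right i)))
            = ∑ i ∈ r.index, ∑ q ∈ (s1 j).index, ∑ p ∈ (r1 i).index,
                ψ ((r1 i).left p * (s1 j).left q) * φ ((r1 i).right p) *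
                  (φ ((s1 j).right q) * ψ (s.right j) * ψ (r.right i)) :=
              Finset.sum_congr rfl fun i _ => Finset.sum_comm
          _ = ∑ q ∈ (s1 j).index, ∑ i ∈ r.index, ∑ p ∈ (r1 i).index,
                ψ ((r1 i).left p * (s1 j).left q) * φ ((r1 i).right p) *
                  (φ ((s1 j).right q) * ψ (s.right j) * ψ (r.right i)) :=
              Finset.sum_comm
    _ = ∑ j ∈ s.index, ∑ q ∈ (s1 j).index, ∑ i ∈ r.index, ∑ p ∈ (r2 i).index,
          ψ (r.left i * (s1 j).left q) * φ ((r2 i).left p) *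
            (φ ((s1 j).right q) * ψ (s.right j) * ψ ((r2 i).right p)) := by
        refine Finset.sum_congr rfl fun j _ => Finset.sum_congr rfl fun q _ => ?_
        have hEx := my_exchange r r1 r2 (ψ ∘ₗ LinearMap.mulRight k ((s1 j).left q)) φ
          ((φ ((s1 j).right q) * ψ (s.right j)) • ψ)
        simp only [LinearMap.coe_comp, Function.comp_apply, LinearMap.mulRight_apply,
          LinearMap.smul_apply, smul_eq_mul] at hEx
        exact hEx
    _ = ∑ j ∈ s.index, ∑ q ∈ (s1 j).index, ∑ i ∈ r.index,
          ψ (r.left i * (s1 j).left q) * (φ ((s1 j).right q) * ψ (s.right j)) *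
            algebraMap k A (Coalgebra.counit (R := k) (r.right i)) := by
        refine Finset.sum_congr rfl fun j _ => Finset.sum_congr rfl fun q _ =>
          Finset.sum_congr rfl fun i _ => ?_
        rw [← P2 _ (r2 i), Finset.mul_sum]
        refine Finset.sum_congr rfl fun p _ => ?_
        ring
    _ = ∑ i ∈ r.index, ∑ j ∈ s.index, ∑ q ∈ (s1 j).index,
          ψ (r.left i * (s1 j).left q) * φ ((s1 j).right q) *
            (algebraMap k A (Coalgebra.counit (R := k) (r.right i)) * ψ (s.right j)) := by
        calc (∑ j ∈ s.index, ∑ q ∈ (s1 j).index, ∑ i ∈ r.index,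
                ψ (r.left i * (s1 j).left q) * (φ ((s1 j).right q) * ψ (s.right j)) *
                  algebraMap k A (Coalgebra.counit (R := k) (r.right i)))
            = ∑ j ∈ s.index, ∑ i ∈ r.index, ∑ q ∈ (s1 j).index,
                ψ (r.left i * (s1 j).left q) * (φ ((s1 j).right q) * ψ (s.right j)) *
                  algebraMap k A (Coalgebra.counit (R := k) (r.right i)) :=
              Finset.sum_congr rfl fun j _ => Finset.sum_comm
          _ = ∑ i ∈ r.index, ∑ j ∈ s.index, ∑ q ∈ (s1 j).index,
                ψ (r.left i * (s1 j).left q) * (φ ((s1 j).right q) * ψ (s.right j)) *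
                  algebraMap k A (Coalgebra.counit (R := k) (r.right i)) :=
              Finset.sum_comm
          _ = _ := by
              refine Finset.sum_congr rfl fun i _ => Finset.sum_congr rfl fun j _ =>
                Finset.sum_congr rfl fun q _ => ?_
              ring
    _ = ∑ i ∈ r.index, ∑ j ∈ s.index, ∑ q ∈ (s2 j).index,
          ψ (r.left i * s.left j) * φ ((s2 j).left q) *
            (algebraMap k A (Coalgebra.counit (R := k) (r.right i)) * ψ ((s2 j).right q)) := by
        refine Finset.sum_congr rfl fun i _ => ?_
        have hEx := my_exchange s s1 s2 (ψ ∘ₗ LinearMap.mulLeft k (r.left i)) φ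
          ((algebraMap k A (Coalgebra.counit (R := k) (r.right i))) • ψ)
        simp only [LinearMap.coe_comp, Function.comp_apply, LinearMap.mulLeft_apply,
          LinearMap.smul_apply, smul_eq_mul] at hEx
        exact hEx
    _ = ∑ i ∈ r.index, ∑ j ∈ s.index,
          ψ (r.left i * s.left j) * algebraMap k A (Coalgebra.counit (R := k) (r.right i)) *
            algebraMap k A (Coalgebra.counit (R := k) (s.right j)) := by
        refine Finset.sum_congr rfl fun i _ => Finset.sum_congr rfl fun j _ => ?_
        rw [← P2 _ (s2 j), Finset.mul_sum]
        refine Finset.sum_congr rfl fun q _ => ?_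
        ring
    _ = ψ (x * y) := by
        conv_rhs => rw [← my_smul_right r, ← my_smul_right s]
        rw [Finset.sum_mul_sum, map_sum]
        refine Finset.sum_congr rfl fun i _ => ?_
        rw [map_sum]
        refine Finset.sum_congr rfl fun j _ => ?_
        rw [smul_mul_assoc, mul_smul_comm, map_smul, map_smul]
        simp only [Algebra.smul_def]
        ring


end
end

section
/- Multiplicativity of the counterterm: let B be a filtered bialgebra with B₀ spanned by group-like elements, A a commutative algebra, and R : A → A an idempotent Rota–Baxter operator (R(xy) + R(x)R(y) = R(R(x)y + xR(y))). If φ : B → A sends group-like elements to 1 and is multiplicative, then the map ψ defined by the Bogoliubov recursion ψ = e - R(ψ * (φ - e)) is multiplicative: ψ(xy) = ψ(x)ψ(y) for all x, y ∈ B. -/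
open TensorProduct

section

variable {k : Type*} [Field k] {B : Type*} [Ring B] [Bialgebra k B]
variable {A : Type*} [CommRing A] [Algebra k A]

set_option maxHeartbeats 1000000 in
/-- Multiplicativity of the counterterm: if `R` is an idempotent Rota–Baxter
operator on the commutative algebra `A` and `φ : B → A` is multiplicative and
sends group-like elements to `1`, then the map `ψ` given by the Bogoliubov
recursion `ψ = e - R(ψ * (φ - e))` is multiplicative. -/
theorem counterterm_multiplicative (F : ℕ → Submodule k B) (hmono : Monotone F)
    (hexh : ⨆ n, F n = ⊤) (hfilt : ComulFiltered F)
    (hF0 : F 0 = Submodule.span k {x : B | IsGroupLike (k := k) x})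
    (R : A →ₗ[k] A) (hidem : ∀ a : A, R (R a) = R a)
    (hRB : ∀ a b : A, R (a * b) + R a * R b = R (R a * b + a * R b))
    (φ ψ : B →ₗ[k] A)
    (hφ1 : ∀ x : B, IsGroupLike (k := k) x → φ x = 1)
    (hφm : ∀ x y : B, φ (x * y) = φ x * φ y)
    (hψ : ψ = convUnit - R ∘ₗ (conv ψ (φ - convUnit))) :
    ∀ x y : B, ψ (x * y) = ψ x * ψ y := by
  classical
  set e : B →ₗ[k] A := convUnit with he_def
  set fb : B →ₗ[k] A := φ - e with hfb_def
  set Φ : B ⊗[k] B →ₗ[k] A := LinearMap.mul' k A ∘ₗ TensorProduct.map ψ fb with hΦ_def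
  set Ψe : B ⊗[k] B →ₗ[k] A := LinearMap.mul' k A ∘ₗ TensorProduct.map ψ e with hΨe_def
  set fm : B ⊗[k] B →ₗ[k] A := fb ∘ₗ LinearMap.mul' k B with hfm_def
  set G : B ⊗[k] B →ₗ[k] A :=
    ψ ∘ₗ LinearMap.mul' k B - LinearMap.mul' k A ∘ₗ TensorProduct.map ψ ψ with hG_def
  set σ := TensorProduct.tensorTensorTensorComm k B B B B with hσ_def
  set Em : (B ⊗[k] B) ⊗[k] (B ⊗[k] B) →ₗ[k] A :=
    LinearMap.mul' k A ∘ₗ TensorProduct.map G fm ∘ₗ σ.toLinearMap with hEm_def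
  -- pointwise facts
  have he_app : ∀ x : B, e x = algebraMap k A (Coalgebra.counit x) := fun x => rfl
  have he_mul : ∀ x y : B, e (x * y) = e x * e y := by
    intro x y; simp [he_app, Bialgebra.counit_mul, map_mul]
  have he_R : ∀ (x : B) (a : A), e x * R a = R (e x * a) := by
    intro x a
    rw [he_app, ← Algebra.smul_def, ← map_smul]
    congr 1
    rw [Algebra.smul_def]
  have hΦ_app : ∀ x y : B, Φ (x ⊗ₜ[k] y) = ψ x * fb y := by
    intro x y; simp [hΦ_def, LinearMap.mul'_apply]
  have hΨe_app : ∀ x y : B, Ψe (x ⊗ₜ[k] y) = ψ x * e y := by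
    intro x y; simp [hΨe_def, LinearMap.mul'_apply]
  have hfm_app : ∀ x y : B, fm (x ⊗ₜ[k] y) = fb (x * y) := by
    intro x y; simp [hfm_def, LinearMap.mul'_apply]
  have hG_app : ∀ x y : B, G (x ⊗ₜ[k] y) = ψ (x * y) - ψ x * ψ y := by
    intro x y
    simp [hG_def, LinearMap.sub_apply, LinearMap.mul'_apply]
  have hEm_app : ∀ a b c d : B,
      Em ((a ⊗ₜ[k] b) ⊗ₜ[k] (c ⊗ₜ[k] d)) = (ψ (a * c) - ψ a * ψ c) * fb (b * d) := by
    intro a b c d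
    simp [hEm_def, hσ_def, TensorProduct.tensorTensorTensorComm_tmul, hG_app, hfm_app,
      LinearMap.mul'_apply]
  have hψ_app : ∀ x : B, ψ x = e x - R (Φ (Coalgebra.comul x)) := by
    intro x
    conv_lhs => rw [hψ]
    simp [conv, hΦ_def, LinearMap.sub_apply, LinearMap.comp_apply]
  have hΨe_comul : ∀ x : B, Ψe (Coalgebra.comul x) = ψ x := by
    intro x
    have h1 : TensorProduct.map ψ e
        = TensorProduct.map ψ (Algebra.linearMap k A)
          ∘ₗ LinearMap.lTensor B (Coalgebra.counit (R := k) (A := B)) := by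
      apply TensorProduct.ext'
      intro a b
      simp [he_def, convUnit]
    rw [hΨe_def]
    simp only [LinearMap.comp_apply, h1]
    rw [Coalgebra.lTensor_counit_comul]
    simp [LinearMap.mul'_apply]
  -- the three multilinear identities
  have key1 : ∀ T S : B ⊗[k] B, Φ T * Φ S + Ψe T * Φ S + Φ T * Ψe S
      = LinearMap.mul' k A
          (TensorProduct.map (LinearMap.mul' k A ∘ₗ TensorProduct.map ψ ψ) fm
            (σ (T ⊗ₜ[k] S))) := by
    intro T S
    induction T using TensorProduct.induction_on with
    | zero => simp
    | tmul a b =>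
      induction S using TensorProduct.induction_on with
      | zero => simp
      | tmul c d =>
        simp only [hΦ_app, hΨe_app, hσ_def, TensorProduct.tensorTensorTensorComm_tmul,
          TensorProduct.map_tmul, LinearMap.mul'_apply, LinearMap.coe_comp, Function.comp_apply,
          hfm_app]
        have hfb_mul : fb (b * d) = fb b * fb d + e b * fb d + fb b * e d := by
          have h1 : fb (b * d) = φ b * φ d - e b * e d := by
            simp [hfb_def, LinearMap.sub_apply, hφm, he_mul]
          have h2 : φ b = fb b + e b := by simp [hfb_def]
          have h3 : φ d = fb d + e d := by simp [hfb_def]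
          rw [h1, h2, h3]; ring
        rw [hfb_mul]; ring
      | add S1 S2 h1 h2 =>
        simp only [map_add, TensorProduct.tmul_add, mul_add, add_mul]
        rw [← h1, ← h2]; ring
    | add T1 T2 h1 h2 =>
      simp only [map_add, TensorProduct.add_tmul, mul_add, add_mul]
      rw [← h1, ← h2]; ring
  have key2 : ∀ T S : B ⊗[k] B, Φ (T * S)
      = LinearMap.mul' k A
          (TensorProduct.map (ψ ∘ₗ LinearMap.mul' k B) fm (σ (T ⊗ₜ[k] S))) := by
    intro T S
    induction T using TensorProduct.induction_on with
    | zero => simp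
    | tmul a b =>
      induction S using TensorProduct.induction_on with
      | zero => simp
      | tmul c d =>
        rw [Algebra.TensorProduct.tmul_mul_tmul]
        simp only [hΦ_app, hσ_def, TensorProduct.tensorTensorTensorComm_tmul,
          TensorProduct.map_tmul, LinearMap.mul'_apply, LinearMap.coe_comp, Function.comp_apply,
          hfm_app]
      | add S1 S2 h1 h2 =>
        simp only [map_add, TensorProduct.tmul_add, mul_add]
        rw [← h1, ← h2]
    | add T1 T2 h1 h2 =>
      simp only [map_add, TensorProduct.add_tmul, add_mul]
      rw [← h1, ← h2]
  have key3 : ∀ u : (B ⊗[k] B) ⊗[k] (B ⊗[k] B),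
      LinearMap.mul' k A
          (TensorProduct.map (LinearMap.mul' k A ∘ₗ TensorProduct.map ψ ψ) fm u)
        - LinearMap.mul' k A (TensorProduct.map (ψ ∘ₗ LinearMap.mul' k B) fm u)
      = - LinearMap.mul' k A (TensorProduct.map G fm u) := by
    intro u
    induction u using TensorProduct.induction_on with
    | zero => simp
    | tmul T S =>
      simp only [TensorProduct.map_tmul, LinearMap.mul'_apply]
      have hGT : G T = (ψ ∘ₗ LinearMap.mul' k B) T
          - (LinearMap.mul' k A ∘ₗ TensorProduct.map ψ ψ) T := by
        rw [hG_def]; simp [LinearMap.sub_apply]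
      rw [hGT]; ring
    | add u1 u2 h1 h2 =>
      simp only [map_add]
      linear_combination h1 + h2
  -- the Bogoliubov comparison identity
  have hstar : ∀ x y : B, ψ (x * y) - ψ x * ψ y
      = - R (Em (Coalgebra.comul x ⊗ₜ[k] Coalgebra.comul y)) := by
    intro x y
    have hx := hψ_app x
    have hy := hψ_app y
    have hRa : R (Φ (Coalgebra.comul x)) = e x - ψ x := by rw [hx]; ring
    have hRb : R (Φ (Coalgebra.comul y)) = e y - ψ y := by rw [hy]; ring
    have hprod : ψ x * ψ y
        = e (x * y) - R (Φ (Coalgebra.comul x) * Φ (Coalgebra.comul y)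
            + ψ x * Φ (Coalgebra.comul y) + Φ (Coalgebra.comul x) * ψ y) := by
      set a := Φ (Coalgebra.comul x) with ha_def
      set b := Φ (Coalgebra.comul y) with hb_def
      have expand : ψ x * ψ y = e x * e y - e x * R b - e y * R a + R a * R b := by
        rw [hx, hy]; ring
      have hRR : R a * R b = R (R a * b + a * R b) - R (a * b) := by
        have h := hRB a b; linear_combination h
      rw [expand, he_R x b, he_R y a, hRR, hRa, hRb, ← he_mul x y]
      have harg : (e x - ψ x) * b + a * (e y - ψ y)
          = (e x * b + e y * a + a * b) - (a * b + ψ x * b + a * ψ y) := by ring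
      rw [harg, map_sub, map_add, map_add]
      ring
    rw [hψ_app (x * y), hprod, Bialgebra.comul_mul, key2 (Coalgebra.comul x) (Coalgebra.comul y),
      ← hΨe_comul x, ← hΨe_comul y, key1]
    set u := σ (Coalgebra.comul x ⊗ₜ[k] Coalgebra.comul y) with hu_def
    have hEmu : Em (Coalgebra.comul x ⊗ₜ[k] Coalgebra.comul y)
        = LinearMap.mul' k A (TensorProduct.map G fm u) := by
      rw [hEm_def]; simp [hu_def]
    rw [hEmu]
    have hrr : ∀ v w : A, (e (x * y) - R w) - (e (x * y) - R v) = R (v - w) := by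
      intro v w; rw [map_sub]; ring
    rw [hrr, key3 u, map_neg]
  -- `fb` kills products of `F 0`
  have hGL : ∀ g h : B, IsGroupLike (k := k) g → IsGroupLike (k := k) h →
      IsGroupLike (k := k) (g * h) := by
    intro g h hg hh
    exact ⟨by rw [Bialgebra.comul_mul, hg.1, hh.1, Algebra.TensorProduct.tmul_mul_tmul],
      by rw [Bialgebra.counit_mul, hg.2, hh.2, one_mul]⟩
  have hfb_gl : ∀ x : B, IsGroupLike (k := k) x → fb x = 0 := by
    intro x hx
    have h1 : e x = 1 := by rw [he_app, hx.2, map_one]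
    simp [hfb_def, LinearMap.sub_apply, hφ1 x hx, h1]
  have hfb0 : ∀ b ∈ F 0, ∀ d ∈ F 0, fb (b * d) = 0 := by
    intro b hb d hd
    rw [hF0] at hb hd
    refine Submodule.span_induction₂ (p := fun b d _ _ => fb (b * d) = 0)
      ?_ ?_ ?_ ?_ ?_ ?_ ?_ hb hd
    · intro g h hg hh; exact hfb_gl _ (hGL g h hg hh)
    · intro y _; simp
    · intro x _; simp
    · intro x y z _ _ _ h1 h2; rw [add_mul, map_add, h1, h2, add_zero]
    · intro x y z _ _ _ h1 h2; rw [mul_add, map_add, h1, h2, add_zero]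
    · intro r x y _ _ h1; rw [smul_mul_assoc, map_smul, h1, smul_zero]
    · intro r x y _ _ h1; rw [mul_smul_comm, map_smul, h1, smul_zero]
  -- main induction on the filtration
  have main : ∀ n p q : ℕ, p + q = n → ∀ x ∈ F p, ∀ y ∈ F q, ψ (x * y) = ψ x * ψ y := by
    intro n
    induction n using Nat.strong_induction_on with
    | _ n IH =>
      intro p q hpq x hx y hy
      have hEm0 : ∀ T ∈ (⨆ pr ∈ {pr : ℕ × ℕ | pr.1 + pr.2 = p},
            LinearMap.range (TensorProduct.map (F pr.1).subtype (F pr.2).subtype)),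
          ∀ S ∈ (⨆ pr ∈ {pr : ℕ × ℕ | pr.1 + pr.2 = q},
            LinearMap.range (TensorProduct.map (F pr.1).subtype (F pr.2).subtype)),
          Em (T ⊗ₜ[k] S) = 0 := by
        intro T hT
        rw [iSup_subtype'] at hT
        induction hT using Submodule.iSup_induction' with
        | mem i z hz =>
          obtain ⟨t, rfl⟩ := hz
          induction t using TensorProduct.induction_on with
          | zero => intro S _; simp
          | tmul ab cd =>
            intro S hS
            rw [iSup_subtype'] at hS
            induction hS using Submodule.iSup_induction' with
            | mem j w hw =>
              obtain ⟨s, rfl⟩ := hw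
              induction s using TensorProduct.induction_on with
              | zero => simp
              | tmul ef gh =>
                simp only [TensorProduct.map_tmul, Submodule.coe_subtype]
                rw [hEm_app]
                by_cases hlt : i.1.1 + j.1.1 < n
                · rw [IH (i.1.1 + j.1.1) hlt i.1.1 j.1.1 rfl ab.1 ab.2 ef.1 ef.2,
                    sub_self, zero_mul]
                · have hi := i.2
                  have hj := j.2
                  simp only [Set.mem_setOf_eq] at hi hj
                  have h2 : i.1.2 = 0 ∧ j.1.2 = 0 := by omega
                  have hb0 : (cd : B) ∈ F 0 := h2.1 ▸ cd.2
                  have hd0 : (gh : B) ∈ F 0 := h2.2 ▸ gh.2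
                  rw [hfb0 _ hb0 _ hd0, mul_zero]
              | add s1 s2 hs1 hs2 =>
                rw [map_add, TensorProduct.tmul_add, map_add, hs1, hs2, add_zero]
            | zero => simp
            | add w1 w2 hw1 hw2 ih1 ih2 =>
              rw [TensorProduct.tmul_add, map_add, ih1, ih2, add_zero]
          | add t1 t2 ht1 ht2 =>
            intro S hS
            rw [map_add, TensorProduct.add_tmul, map_add, ht1 S hS, ht2 S hS, add_zero]
        | zero => intro S _; simp
        | add T1 T2 hT1 hT2 ih1 ih2 =>
          intro S hS
          rw [TensorProduct.add_tmul, map_add, ih1 S hS, ih2 S hS, add_zero]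
      have hx' := Submodule.mem_comap.mp (hfilt p hx)
      have hy' := Submodule.mem_comap.mp (hfilt q hy)
      have hz := hstar x y
      rw [hEm0 _ hx' _ hy', map_zero, neg_zero] at hz
      exact sub_eq_zero.mp hz
  intro x y
  have hx : x ∈ ⨆ n, F n := by rw [hexh]; trivial
  have hy : y ∈ ⨆ n, F n := by rw [hexh]; trivial
  obtain ⟨p, hp⟩ := (Submodule.mem_iSup_of_directed F hmono.directed_le).mp hx
  obtain ⟨q, hq⟩ := (Submodule.mem_iSup_of_directed F hmono.directed_le).mp hy
  exact main (p + q) p q rfl x hp y hq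


end
end
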